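/- Let p be a nonnegative real-valued random variable with cumulative distribution function F (i.e. F(x) = P[p ≤ x]), and let v ≥ 0 be a real number. Then sup_{a ≥ 0} F(a)·(v − a) + E[p] ≥ (1 − 1/e)·v, where E[p] ∈ [0, ∞] denotes the expectation of p (the inequality is trivial when E[p] = ∞). -/

import Mathlib

open MeasureTheory Set

lemma ofReal_max_zero (x : ℝ) : ENNReal.ofReal (max x 0) = ENNReal.ofReal x := by
  rcases le_total x 0 with h | h
  · rw [max_eq_right h, ENNReal.ofReal_of_nonpos h, ENNReal.ofReal_zero]
  · rw [max_eq_left h]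

/-- For a nonnegative real random variable `p` with CDF `F` and any `v ≥ 0`,
`sup_{a ≥ 0} F(a)·(v − a) + E[p] ≥ (1 − 1/e)·v`, where the expectation `E[p] ∈ [0, ∞]`
is taken in the extended nonnegative reals. -/
theorem stmt_0
    {Ω : Type*} [MeasurableSpace Ω] (μ : Measure Ω) [IsProbabilityMeasure μ]
    (p : Ω → ℝ) (hp_meas : Measurable p) (hp_nonneg : ∀ ω, 0 ≤ p ω)
    (F : ℝ → ℝ) (hF : ∀ x, F x = (μ {ω | p ω ≤ x}).toReal)
    (v : ℝ) (hv : 0 ≤ v) :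
    ENNReal.ofReal (sSup {y : ℝ | ∃ a : ℝ, 0 ≤ a ∧ y = F a * (v - a)})
        + ∫⁻ ω, ENNReal.ofReal (p ω) ∂μ
      ≥ ENNReal.ofReal ((1 - (Real.exp 1)⁻¹) * v) := by
  set S := sSup {y : ℝ | ∃ a : ℝ, 0 ≤ a ∧ y = F a * (v - a)} with hSdef
  set c := (1 - (Real.exp 1)⁻¹) * v with hcdef
  have he1 : (1:ℝ) < Real.exp 1 := by
    have := Real.add_one_lt_exp (x := 1) one_ne_zero; linarith
  have heinv : (Real.exp 1)⁻¹ < 1 := inv_lt_one_of_one_lt₀ he1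
  have heinv0 : 0 < (Real.exp 1)⁻¹ := inv_pos.mpr (by linarith)
  have hc0 : 0 ≤ c := mul_nonneg (by linarith) hv
  have hcv : c ≤ v := by
    nlinarith
  have hF01 : ∀ a, 0 ≤ F a ∧ F a ≤ 1 := by
    intro a
    rw [hF a]
    refine ⟨ENNReal.toReal_nonneg, ?_⟩
    have h := prob_le_one (μ := μ) (s := {ω | p ω ≤ a})
    have := ENNReal.toReal_mono (a := μ {ω | p ω ≤ a}) (b := 1) (by simp) h
    simpa using this
  have hmem : ∀ a : ℝ, 0 ≤ a → F a * (v - a) ∈ {y : ℝ | ∃ a : ℝ, 0 ≤ a ∧ y = F a * (v - a)} :=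
    fun a ha => ⟨a, ha, rfl⟩
  have hbdd : BddAbove {y : ℝ | ∃ a : ℝ, 0 ≤ a ∧ y = F a * (v - a)} := by
    refine ⟨v, ?_⟩
    rintro y ⟨a, ha, rfl⟩
    rcases le_total a v with h | h
    · calc F a * (v - a) ≤ 1 * (v - a) :=
            mul_le_mul_of_nonneg_right (hF01 a).2 (by linarith)
        _ ≤ v := by linarith
    · have : F a * (v - a) ≤ 0 := mul_nonpos_of_nonneg_of_nonpos (hF01 a).1 (by linarith)
      linarith
  have hS0 : 0 ≤ S := by
    have h1 : F 0 * (v - 0) ≤ S := le_csSup hbdd (hmem 0 le_rfl)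
    have h2 : 0 ≤ F 0 * (v - 0) := mul_nonneg (hF01 0).1 (by linarith)
    linarith
  rcases le_or_gt c S with hcS | hcS
  · calc ENNReal.ofReal c ≤ ENNReal.ofReal S := ENNReal.ofReal_le_ofReal hcS
      _ ≤ _ := le_self_add
  -- now S < c, hence 0 < c and 0 < v
  have hvpos : 0 < v := by
    rcases hv.lt_or_eq with h | h
    · exact h
    · exfalso; rw [hcdef, ← h] at hcS; simp at hcS; linarith
  have hcltv : c < v := by nlinarith
  -- the comparison function
  set g : ℝ → ℝ := fun t => 1 - S * (v - t)⁻¹ with hgdef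
  have hvt : ∀ t ∈ Icc (0:ℝ) c, 0 < v - t := fun t ht => by
    have := ht.2; linarith
  have hgc : ContinuousOn g (Icc 0 c) := by
    apply ContinuousOn.sub continuousOn_const
    apply ContinuousOn.mul continuousOn_const
    exact ContinuousOn.inv₀ (by fun_prop) (fun t ht => (hvt t ht).ne')
  have hgi : IntegrableOn g (Ioc 0 c) volume :=
    (hgc.integrableOn_Icc).mono_set Ioc_subset_Icc_self
  -- integral computation
  have hvc : v - c = (Real.exp 1)⁻¹ * v := by rw [hcdef]; ring
  have hint : ∫ t in Ioc 0 c, g t = c - S := by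
    rw [← intervalIntegral.integral_of_le hc0]
    have hii : IntervalIntegrable (fun t => S * (v - t)⁻¹) volume 0 c := by
      apply ContinuousOn.intervalIntegrable
      rw [uIcc_of_le hc0]
      apply ContinuousOn.mul continuousOn_const
      exact ContinuousOn.inv₀ (by fun_prop) (fun t ht => (hvt t ht).ne')
    have h1 : ∫ t in (0:ℝ)..c, (1:ℝ) = c := by simp
    have h2 : ∫ t in (0:ℝ)..c, (v - t)⁻¹ = 1 := by
      have := intervalIntegral.integral_comp_sub_left (a := (0:ℝ)) (b := c)
        (fun x : ℝ => x⁻¹) v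
      simp only [sub_zero] at this
      rw [this, integral_inv_of_pos (by linarith) hvpos]
      have : v / (v - c) = Real.exp 1 := by
        rw [hvc]; field_simp
      rw [this, Real.log_exp]
    rw [hgdef]
    rw [intervalIntegral.integral_sub (by apply intervalIntegrable_const) hii]
    rw [intervalIntegral.integral_const_mul, h1, h2]
    ring
  -- pointwise bound: ofReal (g t) ≤ μ {ω | t < p ω} for t ∈ Ioc 0 c
  have hmeas_le : ∀ t : ℝ, MeasurableSet {ω | p ω ≤ t} := fun t =>
    hp_meas measurableSet_Iic
  have hpoint : ∀ t ∈ Ioc (0:ℝ) c,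
      ENNReal.ofReal (g t) ≤ μ {ω | t < p ω} := by
    intro t ht
    have hvt' : 0 < v - t := by have := ht.2; linarith
    have hFt : F t * (v - t) ≤ S := le_csSup hbdd (hmem t ht.1.le)
    have hFle : F t ≤ S * (v - t)⁻¹ := by
      rw [← div_eq_mul_inv, le_div_iff₀ hvt']
      exact hFt
    have hcompl : μ {ω | t < p ω} = 1 - μ {ω | p ω ≤ t} := by
      have : {ω | t < p ω} = {ω | p ω ≤ t}ᶜ := by
        ext ω; simp [not_le]
      rw [this, measure_compl (hmeas_le t) (measure_ne_top μ _), measure_univ]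
    have hofF : ENNReal.ofReal (F t) = μ {ω | p ω ≤ t} := by
      rw [hF t, ENNReal.ofReal_toReal (measure_ne_top μ _)]
    rw [hcompl, ← hofF]
    calc ENNReal.ofReal (g t)
        = ENNReal.ofReal 1 - ENNReal.ofReal (S * (v - t)⁻¹) := by
          rw [hgdef]; exact ENNReal.ofReal_sub _ (by positivity)
      _ ≤ 1 - ENNReal.ofReal (F t) := by
          rw [ENNReal.ofReal_one]
          exact tsub_le_tsub le_rfl (ENNReal.ofReal_le_ofReal hFle)
  -- the chain
  have hlayer : ∫⁻ ω, ENNReal.ofReal (p ω) ∂μ = ∫⁻ t in Ioi (0:ℝ), μ {ω | t < p ω} :=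
    lintegral_eq_lintegral_meas_lt μ (Filter.Eventually.of_forall hp_nonneg)
      hp_meas.aemeasurable
  have hE : ENNReal.ofReal (c - S) ≤ ∫⁻ ω, ENNReal.ofReal (p ω) ∂μ := by
    have step1 : ENNReal.ofReal (c - S) ≤
        ENNReal.ofReal (∫ t in Ioc 0 c, max (g t) 0) := by
      apply ENNReal.ofReal_le_ofReal
      rw [← hint]
      exact integral_mono hgi hgi.pos_part (fun t => le_max_left _ _)
    have step2 : ENNReal.ofReal (∫ t in Ioc 0 c, max (g t) 0)
        = ∫⁻ t in Ioc 0 c, ENNReal.ofReal (g t) := by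
      rw [ofReal_integral_eq_lintegral_ofReal hgi.pos_part
        (Filter.Eventually.of_forall fun t => le_max_right _ _)]
      exact lintegral_congr fun t => ofReal_max_zero (g t)
    have step3 : ∫⁻ t in Ioc 0 c, ENNReal.ofReal (g t)
        ≤ ∫⁻ t in Ioc 0 c, μ {ω | t < p ω} :=
      setLIntegral_mono' measurableSet_Ioc hpoint
    have step4 : ∫⁻ t in Ioc 0 c, μ {ω | t < p ω}
        ≤ ∫⁻ t in Ioi (0:ℝ), μ {ω | t < p ω} :=
      lintegral_mono_set Ioc_subset_Ioi_self
    rw [hlayer]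
    exact step1.trans (step2 ▸ (step3.trans step4))
  have hsplit : ENNReal.ofReal c = ENNReal.ofReal S + ENNReal.ofReal (c - S) := by
    rw [← ENNReal.ofReal_add hS0 (by linarith)]
    ring_nf
  calc ENNReal.ofReal c = ENNReal.ofReal S + ENNReal.ofReal (c - S) := hsplit
    _ ≤ ENNReal.ofReal S + ∫⁻ ω, ENNReal.ofReal (p ω) ∂μ := add_le_add_right hE _
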